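/- arXiv:2107.11478 — 5 statements merged into one kernel-verified Lean document; each statement's English description precedes it below -/
import Mathlib

section
/- Every ℂ-derivation D of the dual numbers DualNumber ℂ is determined by its value on ε, and this value lies in the span of ε: precisely, the ℂ-linear map sending a derivation D : DualNumber ℂ → DualNumber ℂ to D(ε) is injective, its range is the ℂ-span of ε, and consequently the space of ℂ-derivations of DualNumber ℂ is one-dimensional over ℂ. -/
set_option synthInstance.maxHeartbeats 400000
set_option maxHeartbeats 1000000

/-- The ℂ-linear map sending a ℂ-derivation `D` of the dual numbers `ℂ[ε]`
to its value `D ε`. -/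
noncomputable def evalEps :
    Derivation ℂ (DualNumber ℂ) (DualNumber ℂ) →ₗ[ℂ] DualNumber ℂ where
  toFun D := D DualNumber.eps
  map_add' _ _ := rfl
  map_smul' _ _ := rfl

lemma deriv_apply (D : Derivation ℂ (DualNumber ℂ) (DualNumber ℂ)) (x : DualNumber ℂ) :
    D x = x.snd • D DualNumber.eps := by
  conv_lhs => rw [← TrivSqZeroExt.inl_fst_add_inr_snd_eq x]
  rw [map_add, ← TrivSqZeroExt.algebraMap_eq_inl, Derivation.map_algebraMap,
    DualNumber.inr_eq_smul_eps, D.map_smul, zero_add]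

lemma eps_fst_zero (D : Derivation ℂ (DualNumber ℂ) (DualNumber ℂ)) :
    (D DualNumber.eps).fst = 0 := by
  have h := D.leibniz DualNumber.eps DualNumber.eps
  rw [DualNumber.eps_mul_eps, map_zero] at h
  have h3 := congrArg TrivSqZeroExt.snd h.symm
  simp [TrivSqZeroExt.snd_smul] at h3
  exact h3

/-- The derivation sending `a + b ε` to `l * b • ε`. -/
noncomputable def Dlam (l : ℂ) : Derivation ℂ (DualNumber ℂ) (DualNumber ℂ) where
  toLinearMap :=
    { toFun := fun x => (l * x.snd) • DualNumber.eps
      map_add' := fun x y => by simp [mul_add, add_smul]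
      map_smul' := fun c x => by
        simp [TrivSqZeroExt.snd_smul, smul_smul]
        ring_nf }
  map_one_eq_zero' := by simp
  leibniz' := by
    intro a b
    dsimp only [LinearMap.coe_mk, AddHom.coe_mk]
    ext
    · simp [TrivSqZeroExt.snd_mul, TrivSqZeroExt.fst_mul]
    · simp [TrivSqZeroExt.snd_mul, TrivSqZeroExt.snd_mul]
      ring

/-- Every ℂ-derivation of `DualNumber ℂ` is determined by its value on `ε`, this value
lies in the ℂ-span of `ε`, and the space of ℂ-derivations of `DualNumber ℂ` is
one-dimensional over ℂ. -/
theorem stmt_0 :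
    Function.Injective evalEps ∧
    LinearMap.range evalEps =
      (Submodule.span ℂ {DualNumber.eps} : Submodule ℂ (DualNumber ℂ)) ∧
    Module.finrank ℂ (Derivation ℂ (DualNumber ℂ) (DualNumber ℂ)) = 1 := by
  have hinj : Function.Injective evalEps := by
    intro D1 D2 h
    apply Derivation.ext
    intro x
    rw [deriv_apply D1, deriv_apply D2]
    exact congrArg (x.snd • ·) h
  have hrange : LinearMap.range evalEps =
      (Submodule.span ℂ {DualNumber.eps} : Submodule ℂ (DualNumber ℂ)) := by
    apply le_antisymm
    · rintro _ ⟨D, rfl⟩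
      have : evalEps D = (D DualNumber.eps).snd • DualNumber.eps := by
        show D DualNumber.eps = _
        conv_lhs => rw [← TrivSqZeroExt.inl_fst_add_inr_snd_eq (D DualNumber.eps)]
        rw [eps_fst_zero, DualNumber.inr_eq_smul_eps]
        simp
      rw [this]
      exact Submodule.smul_mem _ _ (Submodule.mem_span_singleton_self _)
    · rw [Submodule.span_singleton_le_iff_mem]
      exact ⟨Dlam 1, by simp [evalEps, Dlam]⟩
  refine ⟨hinj, hrange, ?_⟩
  have e : Derivation ℂ (DualNumber ℂ) (DualNumber ℂ) ≃ₗ[ℂ]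
      LinearMap.range evalEps := LinearEquiv.ofInjective evalEps hinj
  rw [e.finrank_eq, hrange, finrank_span_singleton]
  intro h
  have h1 := congrArg TrivSqZeroExt.snd h
  simp at h1
end

section
/- Every ℂ-derivation D of the product algebra DualNumber ℂ × DualNumber ℂ satisfies: there exist λ₁, λ₂ ∈ ℂ with D(ε, 0) = λ₁ • (ε, 0) and D(0, ε) = λ₂ • (0, ε), and D is uniquely determined by the pair (λ₁, λ₂); hence the space of ℂ-derivations of DualNumber ℂ × DualNumber ℂ is two-dimensional over ℂ. -/
set_option maxRecDepth 10000

set_option synthInstance.maxHeartbeats 400000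
set_option maxHeartbeats 1000000

open TrivSqZeroExt
open scoped DualNumber

noncomputable abbrev AA := DualNumber ℂ × DualNumber ℂ

/-- The model derivation with eigenvalues `l.1, l.2`. -/
noncomputable def derOf (l : ℂ × ℂ) : Derivation ℂ AA AA where
  toLinearMap :=
    (l.1 • ((inrHom ℂ ℂ) ∘ₗ (sndHom ℂ ℂ))).prodMap (l.2 • ((inrHom ℂ ℂ) ∘ₗ (sndHom ℂ ℂ)))
  map_one_eq_zero' := by
    ext <;> simp
  leibniz' := by
    intro a b
    have h : ∀ (c : ℂ) (x y : DualNumber ℂ),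
        c • (inr ((x*y).snd) : DualNumber ℂ) =
          x * (c • inr y.snd) + y * (c • inr x.snd) := by
      intro c x y
      ext
      · simp [TrivSqZeroExt.fst_mul]
      · simp only [TrivSqZeroExt.snd_smul, TrivSqZeroExt.snd_add, TrivSqZeroExt.snd_mul,
          TrivSqZeroExt.snd_inr, TrivSqZeroExt.fst_inr, TrivSqZeroExt.fst_smul, smul_zero,
          smul_eq_mul, MulOpposite.smul_eq_mul_unop, MulOpposite.unop_op, MulOpposite.op_smul]
        ring
    ext
    · exact congrArg TrivSqZeroExt.fst (h l.1 a.1 b.1)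
    · exact congrArg TrivSqZeroExt.snd (h l.1 a.1 b.1)
    · exact congrArg TrivSqZeroExt.fst (h l.2 a.2 b.2)
    · exact congrArg TrivSqZeroExt.snd (h l.2 a.2 b.2)

lemma derOf_apply (l : ℂ × ℂ) (x : AA) :
    derOf l x = (l.1 • inr x.1.snd, l.2 • inr x.2.snd) := rfl

lemma deriv_e_eq_zero (D : Derivation ℂ AA AA) :
    D ((1 : DualNumber ℂ), (0 : DualNumber ℂ)) = 0 := by
  set e : AA := ((1 : DualNumber ℂ), (0 : DualNumber ℂ)) with he
  have h1 : e * e = e := by ext <;> simp [he, TrivSqZeroExt.fst_mul, TrivSqZeroExt.snd_mul]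
  have h2 : D e = e * D e + e * D e := by
    nth_rewrite 1 [← h1]
    rw [Derivation.leibniz, smul_eq_mul]
  set w : AA := (1 : AA) - (e + e) with hw
  have hw' : w = ((-1 : DualNumber ℂ), (1 : DualNumber ℂ)) := by
    ext <;> simp [hw, he]
  have hunit : w * w = 1 := by
    rw [hw']
    ext <;> simp [TrivSqZeroExt.fst_mul, TrivSqZeroExt.snd_mul]
  have h3 : w * D e = 0 := by
    rw [hw, sub_mul, one_mul, add_mul, ← h2, sub_self]
  calc D e = (w * w) * D e := by rw [hunit, one_mul]
    _ = w * (w * D e) := mul_assoc _ _ _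
    _ = 0 := by rw [h3, mul_zero]

lemma deriv_f_eq_zero (D : Derivation ℂ AA AA) :
    D ((0 : DualNumber ℂ), (1 : DualNumber ℂ)) = 0 := by
  have h : ((0 : DualNumber ℂ), (1 : DualNumber ℂ)) =
      (1 : AA) - ((1 : DualNumber ℂ), (0 : DualNumber ℂ)) := by
    ext <;> simp
  rw [h, map_sub, Derivation.map_one_eq_zero, deriv_e_eq_zero, sub_zero]

lemma deriv_u (D : Derivation ℂ AA AA) :
    D ((ε : DualNumber ℂ), (0 : DualNumber ℂ)) =
      (D ((ε : DualNumber ℂ), (0:DualNumber ℂ))).1.snd •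
        (((ε : DualNumber ℂ), (0 : DualNumber ℂ)) : AA) := by
  set u : AA := ((ε : DualNumber ℂ), (0 : DualNumber ℂ)) with hu
  set e : AA := ((1 : DualNumber ℂ), (0 : DualNumber ℂ)) with he
  have h1 : u = e * u := by
    ext <;> simp [hu, he, TrivSqZeroExt.fst_mul, TrivSqZeroExt.snd_mul]
  have h2 : D u = e * D u := by
    nth_rewrite 1 [h1]
    rw [Derivation.leibniz, deriv_e_eq_zero, smul_zero, add_zero, smul_eq_mul]
  have hsnd : (D u).2 = 0 := by
    have := congrArg Prod.snd h2
    simpa [he, TrivSqZeroExt.fst_mul, TrivSqZeroExt.snd_mul] using this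
  have h0 : u * u = 0 := by
    ext <;> simp [hu, TrivSqZeroExt.fst_mul, TrivSqZeroExt.snd_mul]
  have hlei := Derivation.leibniz D u u
  rw [h0, map_zero, smul_eq_mul] at hlei
  have h3 : u * D u = 0 := by
    have h4 : (2:ℂ) • (u * D u) = 0 := by rw [two_smul]; exact hlei.symm
    have := smul_eq_zero.mp h4
    simpa using this.resolve_left (by norm_num)
  have hfst1 : (D u).1.fst = 0 := by
    have := congrArg (fun z : AA => (z.1).snd) h3
    simpa [hu, TrivSqZeroExt.fst_mul, TrivSqZeroExt.snd_mul] using this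
  ext
  · simpa [hu] using hfst1
  · simp [hu]
  · rw [hsnd]; simp [hu]
  · rw [hsnd]; simp [hu]

lemma deriv_v (D : Derivation ℂ AA AA) :
    D ((0 : DualNumber ℂ), (ε : DualNumber ℂ)) =
      (D ((0:DualNumber ℂ), (ε : DualNumber ℂ))).2.snd •
        (((0 : DualNumber ℂ), (ε : DualNumber ℂ)) : AA) := by
  set u : AA := ((0 : DualNumber ℂ), (ε : DualNumber ℂ)) with hu
  set f : AA := ((0 : DualNumber ℂ), (1 : DualNumber ℂ)) with hf
  have h1 : u = f * u := by
    ext <;> simp [hu, hf, TrivSqZeroExt.fst_mul, TrivSqZeroExt.snd_mul]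
  have h2 : D u = f * D u := by
    nth_rewrite 1 [h1]
    rw [Derivation.leibniz, deriv_f_eq_zero, smul_zero, add_zero, smul_eq_mul]
  have hsnd : (D u).1 = 0 := by
    have := congrArg Prod.fst h2
    simpa [hf, TrivSqZeroExt.fst_mul, TrivSqZeroExt.snd_mul] using this
  have h0 : u * u = 0 := by
    ext <;> simp [hu, TrivSqZeroExt.fst_mul, TrivSqZeroExt.snd_mul]
  have hlei := Derivation.leibniz D u u
  rw [h0, map_zero, smul_eq_mul] at hlei
  have h3 : u * D u = 0 := by
    have h4 : (2:ℂ) • (u * D u) = 0 := by rw [two_smul]; exact hlei.symm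
    have := smul_eq_zero.mp h4
    simpa using this.resolve_left (by norm_num)
  have hfst1 : (D u).2.fst = 0 := by
    have := congrArg (fun z : AA => (z.2).snd) h3
    simpa [hu, TrivSqZeroExt.fst_mul, TrivSqZeroExt.snd_mul] using this
  ext
  · rw [hsnd]; simp [hu]
  · rw [hsnd]; simp [hu]
  · simpa [hu] using hfst1
  · simp [hu]

lemma uniq (D₁ D₂ : Derivation ℂ AA AA)
    (h1 : D₁ ((ε : DualNumber ℂ), (0 : DualNumber ℂ)) = D₂ ((ε : DualNumber ℂ), (0 : DualNumber ℂ)))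
    (h2 : D₁ ((0 : DualNumber ℂ), (ε : DualNumber ℂ)) = D₂ ((0 : DualNumber ℂ), (ε : DualNumber ℂ))) :
    D₁ = D₂ := by
  apply Derivation.ext
  intro x
  have hx : x = x.1.fst • (((1:DualNumber ℂ), (0:DualNumber ℂ)) : AA)
      + x.1.snd • (((ε:DualNumber ℂ), (0:DualNumber ℂ)) : AA)
      + x.2.fst • (((0:DualNumber ℂ), (1:DualNumber ℂ)) : AA)
      + x.2.snd • (((0:DualNumber ℂ), (ε:DualNumber ℂ)) : AA) := by
    ext <;> simp
  rw [hx]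
  simp only [map_add, Derivation.map_smul, map_smul, deriv_e_eq_zero, deriv_f_eq_zero, h1, h2]

/-- Every ℂ-derivation `D` of `ℂ[ε] × ℂ[ε]` satisfies `D (ε, 0) = λ₁ • (ε, 0)` and
`D (0, ε) = λ₂ • (0, ε)` for some `λ₁, λ₂ ∈ ℂ`, and is uniquely determined by its
values on `(ε, 0)` and `(0, ε)`; hence the space of ℂ-derivations of `ℂ[ε] × ℂ[ε]` is
two-dimensional over ℂ. -/
theorem stmt_8 :
    (∀ D : Derivation ℂ (DualNumber ℂ × DualNumber ℂ) (DualNumber ℂ × DualNumber ℂ),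
      ∃ l₁ l₂ : ℂ,
        D ((DualNumber.eps : DualNumber ℂ), (0 : DualNumber ℂ)) =
          l₁ • (((DualNumber.eps : DualNumber ℂ), (0 : DualNumber ℂ)) :
            DualNumber ℂ × DualNumber ℂ) ∧
        D ((0 : DualNumber ℂ), (DualNumber.eps : DualNumber ℂ)) =
          l₂ • (((0 : DualNumber ℂ), (DualNumber.eps : DualNumber ℂ)) :
            DualNumber ℂ × DualNumber ℂ)) ∧
    (∀ D₁ D₂ : Derivation ℂ (DualNumber ℂ × DualNumber ℂ) (DualNumber ℂ × DualNumber ℂ),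
      D₁ ((DualNumber.eps : DualNumber ℂ), (0 : DualNumber ℂ)) =
        D₂ ((DualNumber.eps : DualNumber ℂ), (0 : DualNumber ℂ)) →
      D₁ ((0 : DualNumber ℂ), (DualNumber.eps : DualNumber ℂ)) =
        D₂ ((0 : DualNumber ℂ), (DualNumber.eps : DualNumber ℂ)) →
      D₁ = D₂) ∧
    Module.finrank ℂ
      (Derivation ℂ (DualNumber ℂ × DualNumber ℂ) (DualNumber ℂ × DualNumber ℂ)) = 2 := by
  refine ⟨fun D => ⟨_, _, deriv_u D, deriv_v D⟩, uniq, ?_⟩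
  have Φbij : Function.Bijective (fun l : ℂ × ℂ => derOf l) := by
    constructor
    · intro l m h
      have h1 := congrArg (fun D : Derivation ℂ AA AA =>
        (D ((ε:DualNumber ℂ), (0:DualNumber ℂ))).1.snd) h
      have h2 := congrArg (fun D : Derivation ℂ AA AA =>
        (D ((0:DualNumber ℂ), (ε:DualNumber ℂ))).2.snd) h
      simp [derOf_apply] at h1 h2
      exact Prod.ext h1 h2
    · intro D
      refine ⟨((D ((ε:DualNumber ℂ), (0:DualNumber ℂ))).1.snd,
        (D ((0:DualNumber ℂ), (ε:DualNumber ℂ))).2.snd), ?_⟩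
      apply uniq
      · rw [deriv_u D, derOf_apply]
        ext <;> simp
      · rw [deriv_v D, derOf_apply]
        ext <;> simp
  have Φlin : IsLinearMap ℂ (fun l : ℂ × ℂ => derOf l) := by
    constructor
    · intro a b; ext x : 1; simp only [derOf_apply, Derivation.add_apply, Prod.mk_add_mk, Prod.fst_add, Prod.snd_add,
        add_smul]
    · intro c a
      apply Derivation.ext; intro x
      have h : (c • derOf a) x = c • (derOf a x) := rfl
      rw [h, derOf_apply, derOf_apply, Prod.smul_mk]
      refine Prod.ext ?_ ?_
      · show (c * a.1) • (inr (snd x.1) : DualNumber ℂ) =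
          c • (a.1 • (inr (snd x.1) : DualNumber ℂ))
        exact mul_smul c a.1 _
      · show (c * a.2) • (inr (snd x.2) : DualNumber ℂ) =
          c • (a.2 • (inr (snd x.2) : DualNumber ℂ))
        exact mul_smul c a.2 _
  let e : (ℂ × ℂ) ≃ₗ[ℂ] Derivation ℂ AA AA :=
    LinearEquiv.ofBijective (IsLinearMap.mk' _ Φlin) Φbij
  rw [← e.finrank_eq]
  simp [Module.finrank_prod]
end

section
/- The space of ℂ-derivations of the product algebra ℂ × (ℂ[X]/(X³)) has dimension 2 over ℂ; explicitly, every such derivation vanishes on the idempotents (1,0) and (0,1) and is uniquely determined by its value on (0, x), which may be any element of the ideal generated by (0, x) (here x denotes the class of X in ℂ[X]/(X³)). -/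
set_option synthInstance.maxHeartbeats 400000
set_option maxHeartbeats 1000000

/-- The truncated polynomial algebra `ℂ[X]/(X³)`. -/
noncomputable abbrev TruncPoly3 : Type :=
  Polynomial ℂ ⧸ Ideal.span {(Polynomial.X : Polynomial ℂ) ^ 3}

/-- The class of `X` in `ℂ[X]/(X³)`. -/
noncomputable abbrev truncX3 : TruncPoly3 :=
  Ideal.Quotient.mk (Ideal.span {(Polynomial.X : Polynomial ℂ) ^ 3}) Polynomial.X

open Polynomial

local notation "I3" => Ideal.span {(Polynomial.X : Polynomial ℂ) ^ 3}
local notation "mk3" => Ideal.Quotient.mk I3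

lemma mk_smul (c : ℂ) (p : ℂ[X]) : mk3 (c • p) = c • mk3 p := by
  exact map_smul (Ideal.Quotient.mkₐ ℂ I3) c p

lemma mkC (c : ℂ) : mk3 (C c) = c • (1 : TruncPoly3) := by
  have h : (C c : ℂ[X]) = c • 1 := by
    rw [← Algebra.algebraMap_eq_smul_one]; rfl
  rw [h, mk_smul, map_one]

lemma mk_key (c₀ c₁ c₂ : ℂ) :
    mk3 (C c₀ + C c₁ * X + C c₂ * X ^ 2) =
      c₀ • (1 : TruncPoly3) + c₁ • truncX3 + c₂ • truncX3 ^ 2 := by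
  rw [map_add, map_add, map_mul, map_mul, map_pow, mkC, mkC, mkC,
    smul_mul_assoc, smul_mul_assoc, one_mul, one_mul]

lemma truncX3_pow3 : truncX3 ^ 3 = 0 := by
  rw [truncX3, ← map_pow, Ideal.Quotient.eq_zero_iff_mem]
  exact Ideal.subset_span rfl

lemma trunc_indep {c₀ c₁ c₂ : ℂ}
    (h : c₀ • (1 : TruncPoly3) + c₁ • truncX3 + c₂ • truncX3 ^ 2 = 0) :
    c₀ = 0 ∧ c₁ = 0 ∧ c₂ = 0 := by
  have h' : mk3 (C c₀ + C c₁ * X + C c₂ * X ^ 2) = 0 := by rw [mk_key, h]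
  rw [Ideal.Quotient.eq_zero_iff_mem, Ideal.mem_span_singleton] at h'
  set p : ℂ[X] := C c₀ + C c₁ * X + C c₂ * X ^ 2 with hp
  have hdeg : p.degree ≤ 2 := by
    apply le_trans (degree_add_le _ _) ?_
    simp only [sup_le_iff]
    constructor
    · apply le_trans (degree_add_le _ _)
      simp only [sup_le_iff]
      refine ⟨le_trans (degree_C_le) (by norm_num), ?_⟩
      apply le_trans (degree_mul_le _ _)
      calc (C c₁).degree + X.degree ≤ 0 + 1 := add_le_add degree_C_le degree_X_le
        _ ≤ 2 := by norm_num
    · apply le_trans (degree_mul_le _ _)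
      calc (C c₂).degree + (X ^ 2).degree ≤ 0 + 2 :=
            add_le_add degree_C_le (degree_pow_le_of_le 2 degree_X_le)
        _ ≤ 2 := by norm_num
  have hp0 : p = 0 := by
    by_contra hne
    have := Polynomial.degree_le_of_dvd h' hne
    rw [degree_X_pow] at this
    exact absurd (le_trans this hdeg) (by norm_num)
  refine ⟨?_, ?_, ?_⟩
  · have := congrArg (fun q => Polynomial.coeff q 0) hp0
    simpa [hp] using this
  · have := congrArg (fun q => Polynomial.coeff q 1) hp0
    simpa [hp] using this
  · have := congrArg (fun q => Polynomial.coeff q 2) hp0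
    simpa [hp] using this

lemma trunc_rep (y : TruncPoly3) :
    ∃ c₀ c₁ c₂ : ℂ, y = c₀ • (1 : TruncPoly3) + c₁ • truncX3 + c₂ • truncX3 ^ 2 := by
  obtain ⟨q, rfl⟩ := Ideal.Quotient.mk_surjective (I := I3) y
  obtain ⟨r, hmk, hdeg⟩ : ∃ r : ℂ[X], mk3 q = mk3 r ∧ r.natDegree < 3 := by
    refine ⟨q %ₘ X ^ 3, ?_, ?_⟩
    · rw [Ideal.Quotient.eq, Ideal.mem_span_singleton]
      exact ⟨q /ₘ X ^ 3, by
        have := (Polynomial.modByMonic_add_div q (X ^ 3)).symm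
        linear_combination this⟩
    · rcases eq_or_ne (q %ₘ X ^ 3) 0 with h0 | h0
      · rw [h0]; simp
      · exact (natDegree_lt_iff_degree_lt h0).mpr
          (by simpa using Polynomial.degree_modByMonic_lt q (monic_X_pow (R := ℂ) 3))
  obtain ⟨c₀, c₁, c₂, hrsum⟩ : ∃ c₀ c₁ c₂ : ℂ, r = C c₀ + C c₁ * X + C c₂ * X ^ 2 := by
    refine ⟨r.coeff 0, r.coeff 1, r.coeff 2, ?_⟩
    have h := Polynomial.as_sum_range' r 3 hdeg
    rw [Finset.sum_range_succ, Finset.sum_range_succ, Finset.sum_range_one] at h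
    calc r = _ := h
      _ = C (r.coeff 0) + C (r.coeff 1) * X + C (r.coeff 2) * X ^ 2 := by
          rw [Polynomial.monomial_zero_left, ← Polynomial.C_mul_X_pow_eq_monomial,
            ← Polynomial.C_mul_X_pow_eq_monomial, pow_one]
  exact ⟨c₀, c₁, c₂, by rw [hmk, hrsum, mk_key]⟩

-- ## Construction of derivations

/-- Underlying function of the derivation `p ↦ w * p'` on `ℂ[X]/(X³)`. -/
noncomputable def LFun (w : TruncPoly3) (hw : w * truncX3 ^ 2 = 0) :
    TruncPoly3 → TruncPoly3 := fun y =>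
  Quotient.liftOn' y (fun p => w * mk3 (derivative p)) (by
    intro a b hab
    have hmem : a - b ∈ I3 := by
      have h : (mk3 a : TruncPoly3) = mk3 b := Quotient.sound' hab
      exact Ideal.Quotient.eq.mp h
    rw [Ideal.mem_span_singleton] at hmem
    obtain ⟨g, hg⟩ := hmem
    have hd : derivative a - derivative b = X ^ 2 * (C 3 * g) + X ^ 3 * derivative g := by
      have := congrArg derivative hg
      rw [map_sub, derivative_mul, derivative_X_pow] at this
      rw [this]; push_cast; ring
    have hdm : mk3 (derivative a) - mk3 (derivative b)
        = truncX3 ^ 2 * mk3 (C 3 * g) := by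
      rw [← map_sub, hd, map_add, map_mul, map_mul, map_mul, map_pow, map_pow]
      have h3 : mk3 (X ^ 3 : ℂ[X]) = 0 := by
        rw [Ideal.Quotient.eq_zero_iff_mem]; exact Ideal.subset_span rfl
      rw [map_pow] at h3
      rw [h3, zero_mul, add_zero]
    have hkey : w * mk3 (derivative a) = w * mk3 (derivative b) := by
      have h0 : w * (mk3 (derivative a) - mk3 (derivative b)) = 0 := by
        rw [hdm]
        calc w * (truncX3 ^ 2 * mk3 (C 3 * g)) = w * truncX3 ^ 2 * mk3 (C 3 * g) := by ring
          _ = 0 := by rw [hw]; ring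
      linear_combination h0
    exact hkey)

lemma LFun_mk (w : TruncPoly3) (hw : w * truncX3 ^ 2 = 0) (p : ℂ[X]) :
    LFun w hw (mk3 p) = w * mk3 (derivative p) := rfl

/-- The map `LFun` bundled as a `ℂ`-linear map. -/
noncomputable def Llin (w : TruncPoly3) (hw : w * truncX3 ^ 2 = 0) :
    TruncPoly3 →ₗ[ℂ] TruncPoly3 where
  toFun := LFun w hw
  map_add' := fun y z => by
    obtain ⟨p, rfl⟩ := Ideal.Quotient.mk_surjective (I := I3) y
    obtain ⟨q, rfl⟩ := Ideal.Quotient.mk_surjective (I := I3) z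
    rw [← map_add, LFun_mk, LFun_mk, LFun_mk, map_add, map_add, mul_add]
  map_smul' := fun c y => by
    obtain ⟨p, rfl⟩ := Ideal.Quotient.mk_surjective (I := I3) y
    show LFun w hw (c • mk3 p) = c • LFun w hw (mk3 p)
    rw [← mk_smul, LFun_mk, LFun_mk, derivative_smul, mk_smul, mul_smul_comm]

lemma Llin_leibniz (w : TruncPoly3) (hw : w * truncX3 ^ 2 = 0) (y z : TruncPoly3) :
    Llin w hw (y * z) = y * Llin w hw z + z * Llin w hw y := by
  obtain ⟨p, rfl⟩ := Ideal.Quotient.mk_surjective (I := I3) y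
  obtain ⟨q, rfl⟩ := Ideal.Quotient.mk_surjective (I := I3) z
  show LFun w hw (mk3 p * mk3 q) = mk3 p * LFun w hw (mk3 q) + mk3 q * LFun w hw (mk3 p)
  rw [← map_mul, LFun_mk, LFun_mk, LFun_mk, derivative_mul, map_add, map_mul, map_mul]
  ring

/-- The derivation of `ℂ × ℂ[X]/(X³)` sending `(a, p)` to `(0, w * p')`. -/
noncomputable def Dmk (w : TruncPoly3) (hw : w * truncX3 ^ 2 = 0) :
    Derivation ℂ (ℂ × TruncPoly3) (ℂ × TruncPoly3) where
  toLinearMap := (LinearMap.inr ℂ ℂ TruncPoly3).comp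
    ((Llin w hw).comp (LinearMap.snd ℂ ℂ TruncPoly3))
  map_one_eq_zero' := by
    have : Llin w hw 1 = 0 := by
      have h1 : (1 : TruncPoly3) = mk3 1 := rfl
      show LFun w hw 1 = 0
      rw [h1, LFun_mk, derivative_one, map_zero, mul_zero]
    simp only [LinearMap.comp_apply, LinearMap.snd_apply, LinearMap.inr_apply]
    show ((0 : ℂ), Llin w hw (1 : ℂ × TruncPoly3).2) = 0
    rw [show ((1 : ℂ × TruncPoly3)).2 = 1 from rfl, this]; rfl
  leibniz' := fun a b => by
    simp only [LinearMap.comp_apply, LinearMap.snd_apply, LinearMap.inr_apply,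
      smul_eq_mul]
    show ((0 : ℂ), Llin w hw (a * b).2) = a • ((0 : ℂ), Llin w hw b.2) +
      b • ((0 : ℂ), Llin w hw a.2)
    have h1 : (a * b).2 = a.2 * b.2 := rfl
    rw [h1, Llin_leibniz]
    show _ = a * ((0 : ℂ), Llin w hw b.2) + b * ((0 : ℂ), Llin w hw a.2)
    ext
    · show (0 : ℂ) = a.1 * 0 + b.1 * 0; ring
    · show a.2 * Llin w hw b.2 + b.2 * Llin w hw a.2 = _
      rfl

lemma Dmk_apply_t (w : TruncPoly3) (hw : w * truncX3 ^ 2 = 0) :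
    Dmk w hw ((0 : ℂ), truncX3) = ((0 : ℂ), w) := by
  show ((0 : ℂ), LFun w hw truncX3) = ((0 : ℂ), w)
  rw [show truncX3 = mk3 X from rfl, LFun_mk, derivative_X, map_one, mul_one]

-- ## Derivation facts

local notation "A4" => (ℂ × TruncPoly3)
local notation "tA" => (((0 : ℂ), truncX3) : ℂ × TruncPoly3)
local notation "e1" => (((1 : ℂ), (0 : TruncPoly3)) : ℂ × TruncPoly3)
local notation "e2" => (((0 : ℂ), (1 : TruncPoly3)) : ℂ × TruncPoly3)

lemma deriv_idem (D : Derivation ℂ A4 A4) {e : A4} (he : e * e = e) : D e = 0 := by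
  have h : D e = e * D e + e * D e := by
    have h0 := D.leibniz e e
    rw [he] at h0
    simpa [smul_eq_mul] using h0
  have h2 : e * D e = 0 := by
    have h3 : e * D e = e * D e + e * D e := by
      calc e * D e = e * (e * D e + e * D e) := by rw [← h]
        _ = (e * e) * D e + (e * e) * D e := by ring
        _ = e * D e + e * D e := by rw [he]
    exact (left_eq_add.mp h3)
  rw [h, h2, add_zero]

lemma he1 : e1 * e1 = e1 := by
  rw [Prod.mk_mul_mk, mul_one, mul_zero]

lemma he2 : e2 * e2 = e2 := by
  rw [Prod.mk_mul_mk, mul_one, mul_zero]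

lemma tA_mul_tA : tA * tA = ((0 : ℂ), truncX3 ^ 2) := by
  rw [Prod.mk_mul_mk, mul_zero, ← pow_two]

lemma A4_rep (a : A4) :
    ∃ c c₀ c₁ c₂ : ℂ, a = c • e1 + c₀ • e2 + c₁ • tA + c₂ • (tA * tA) := by
  obtain ⟨c₀, c₁, c₂, hy⟩ := trunc_rep a.2
  refine ⟨a.1, c₀, c₁, c₂, ?_⟩
  rw [tA_mul_tA]
  ext
  · show a.1 = a.1 • (1 : ℂ) + c₀ • (0 : ℂ) + c₁ • (0 : ℂ) + c₂ • (0 : ℂ)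
    simp
  · show a.2 = a.1 • (0 : TruncPoly3) + c₀ • 1 + c₁ • truncX3 + c₂ • truncX3 ^ 2
    rw [smul_zero, zero_add, ← hy]

lemma deriv_unique (D₁ D₂ : Derivation ℂ A4 A4) (h : D₁ tA = D₂ tA) : D₁ = D₂ := by
  have key : ∀ D : Derivation ℂ A4 A4, ∀ c c₀ c₁ c₂ : ℂ,
      D (c • e1 + c₀ • e2 + c₁ • tA + c₂ • (tA * tA)) =
        c₁ • D tA + c₂ • (tA • D tA + tA • D tA) := by
    intro D c c₀ c₁ c₂
    rw [map_add, map_add, map_add, Derivation.map_smul, Derivation.map_smul,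
      Derivation.map_smul, Derivation.map_smul, deriv_idem D he1, deriv_idem D he2,
      Derivation.leibniz, smul_zero, smul_zero, zero_add, zero_add]
  refine Derivation.ext fun a => ?_
  obtain ⟨c, c₀, c₁, c₂, rfl⟩ := A4_rep a
  rw [key, key, h]

lemma deriv_t_mem (D : Derivation ℂ A4 A4) :
    D tA ∈ Ideal.span ({tA} : Set A4) := by
  -- first component of `D tA` vanishes
  have hfst : (D tA).1 = 0 := by
    have h0 : e1 * tA = 0 := by rw [Prod.mk_mul_mk, mul_zero, zero_mul]; rfl
    have h := D.leibniz e1 tA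
    rw [h0, map_zero, deriv_idem D he1, smul_zero, add_zero, smul_eq_mul] at h
    have := congrArg Prod.fst h.symm
    simpa using this
  -- `x² * (D tA).2 = 0`
  have hx2 : truncX3 ^ 2 * (D tA).2 = 0 := by
    have h30 : tA * tA * tA = 0 := by
      rw [tA_mul_tA, Prod.mk_mul_mk, mul_zero, ← pow_succ]
      rw [show truncX3 ^ 3 = 0 from truncX3_pow3]
      rfl
    have h := D.leibniz (tA * tA) tA
    rw [h30, map_zero, Derivation.leibniz] at h
    simp only [smul_eq_mul] at h
    set v : A4 := tA * tA * D tA with hv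
    have hw : v + v + v = 0 := by
      rw [hv]
      calc tA * tA * D tA + tA * tA * D tA + tA * tA * D tA
          = tA * tA * D tA + tA * (tA * D tA + tA * D tA) := by ring
        _ = 0 := h.symm
    have h3v : (3 : ℂ) • v = 0 := by
      rw [show (3 : ℂ) = 1 + 1 + 1 by norm_num, add_smul, add_smul, one_smul]
      exact hw
    have hv0 : v = 0 := by
      have := congrArg (fun z => (3 : ℂ)⁻¹ • z) h3v
      simpa [smul_smul] using this
    have h2 := congrArg Prod.snd hv0
    rw [hv] at h2
    simpa [Prod.snd_mul, ← sq] using h2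
  obtain ⟨c₀, c₁, c₂, hy⟩ := trunc_rep (D tA).2
  have hc₀ : c₀ = 0 := by
    have : truncX3 ^ 2 * (D tA).2 = c₀ • truncX3 ^ 2 := by
      have e4 : truncX3 ^ 2 * truncX3 ^ 2 = 0 := by
        calc truncX3 ^ 2 * truncX3 ^ 2 = truncX3 ^ 3 * truncX3 := by ring
          _ = 0 := by rw [truncX3_pow3, zero_mul]
      rw [hy]
      calc truncX3 ^ 2 * (c₀ • 1 + c₁ • truncX3 + c₂ • truncX3 ^ 2)
          = c₀ • truncX3 ^ 2 + c₁ • truncX3 ^ 3 + c₂ • (truncX3 ^ 2 * truncX3 ^ 2) := by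
            rw [mul_add, mul_add, mul_smul_comm, mul_smul_comm, mul_smul_comm, mul_one,
              ← pow_succ]
        _ = c₀ • truncX3 ^ 2 := by
            rw [truncX3_pow3, e4, smul_zero, smul_zero, add_zero, add_zero]
    rw [hx2] at this
    have h0 : (0 : ℂ) • (1 : TruncPoly3) + (0 : ℂ) • truncX3 + c₀ • truncX3 ^ 2 = 0 := by
      rw [zero_smul, zero_smul, zero_add, zero_add, ← this]
    exact (trunc_indep h0).2.2
  have hDt : D tA = c₁ • tA + c₂ • (tA * tA) := by
    rw [tA_mul_tA]
    ext
    · show (D tA).1 = c₁ • (0 : ℂ) + c₂ • (0 : ℂ)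
      rw [hfst]; simp
    · show (D tA).2 = c₁ • truncX3 + c₂ • truncX3 ^ 2
      rw [hy, hc₀, zero_smul, zero_add]
  rw [hDt]
  have ht : tA ∈ Ideal.span ({tA} : Set A4) := Ideal.subset_span rfl
  exact add_mem (Submodule.smul_of_tower_mem _ c₁ ht)
    (Submodule.smul_of_tower_mem _ c₂ (Ideal.mul_mem_left _ tA ht))

lemma mul_t (a : A4) : ∃ c₀ c₁ : ℂ, a * tA = c₀ • tA + c₁ • (tA * tA) := by
  obtain ⟨c₀, c₁, c₂, hy⟩ := trunc_rep a.2
  refine ⟨c₀, c₁, ?_⟩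
  rw [tA_mul_tA]
  ext
  · show a.1 * 0 = c₀ • (0 : ℂ) + c₁ • (0 : ℂ)
    simp
  · show a.2 * truncX3 = c₀ • truncX3 + c₁ • truncX3 ^ 2
    rw [hy, add_mul, add_mul, smul_mul_assoc, smul_mul_assoc, smul_mul_assoc, one_mul,
      ← sq, ← pow_succ, truncX3_pow3, smul_zero, add_zero]

lemma range_eq :
    Set.range (fun D : Derivation ℂ A4 A4 => D tA) =
      ((Ideal.span {tA} : Ideal A4) : Set A4) := by
  ext v
  constructor
  · rintro ⟨D, rfl⟩
    exact deriv_t_mem D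
  · intro hv
    rw [SetLike.mem_coe, Ideal.mem_span_singleton'] at hv
    obtain ⟨a, ha⟩ := hv
    obtain ⟨c₀, c₁, hat⟩ := mul_t a
    set w : TruncPoly3 := c₀ • truncX3 + c₁ • truncX3 ^ 2 with hwdef
    have hw : w * truncX3 ^ 2 = 0 := by
      rw [hwdef, add_mul, smul_mul_assoc, smul_mul_assoc, ← pow_succ',
        show truncX3 ^ 2 * truncX3 ^ 2 = truncX3 ^ 3 * truncX3 by ring,
        truncX3_pow3, zero_mul, smul_zero, smul_zero, add_zero]
    refine ⟨Dmk w hw, ?_⟩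
    show Dmk w hw tA = v
    rw [Dmk_apply_t, ← ha, hat, tA_mul_tA]
    ext
    · show (0 : ℂ) = c₀ • (0 : ℂ) + c₁ • (0 : ℂ)
      simp
    · show w = c₀ • truncX3 + c₁ • truncX3 ^ 2
      rfl

lemma ideal_restrict :
    (Ideal.span {tA} : Ideal A4).restrictScalars ℂ =
      Submodule.span ℂ ({tA, tA * tA} : Set A4) := by
  apply le_antisymm
  · intro v hv
    have hv' : v ∈ Ideal.span ({tA} : Set A4) := hv
    rw [Ideal.mem_span_singleton'] at hv'
    obtain ⟨a, ha⟩ := hv'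
    obtain ⟨c₀, c₁, hat⟩ := mul_t a
    rw [← ha, hat]
    exact Submodule.add_mem _
      (Submodule.smul_mem _ _ (Submodule.subset_span (Set.mem_insert _ _)))
      (Submodule.smul_mem _ _ (Submodule.subset_span (Set.mem_insert_of_mem _ rfl)))
  · rw [Submodule.span_le]
    rintro v hv
    rcases hv with rfl | hv
    · exact Ideal.subset_span rfl
    · rw [Set.mem_singleton_iff] at hv
      subst hv
      exact Ideal.mul_mem_left _ tA (Ideal.subset_span rfl)

lemma li_pair : LinearIndependent ℂ ![tA, tA * tA] := by
  rw [LinearIndependent.pair_iff]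
  intro s u hsu
  have h2 := congrArg Prod.snd hsu
  simp only [Prod.snd_add, Prod.smul_snd, tA_mul_tA] at h2
  have h0 : (0 : ℂ) • (1 : TruncPoly3) + s • truncX3 + u • truncX3 ^ 2 = 0 := by
    rw [zero_smul, zero_add]
    exact h2
  exact ⟨(trunc_indep h0).2.1, (trunc_indep h0).2.2⟩


/-- The space of ℂ-derivations of `ℂ × ℂ[X]/(X³)` is two-dimensional over ℂ: every
derivation vanishes on the idempotents `(1,0)` and `(0,1)`, is uniquely determined by
its value on `(0, x)`, and this value can be any element of the ideal generated by
`(0, x)`. -/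
theorem stmt_9 :
    Module.finrank ℂ (Derivation ℂ (ℂ × TruncPoly3) (ℂ × TruncPoly3)) = 2 ∧
    (∀ D : Derivation ℂ (ℂ × TruncPoly3) (ℂ × TruncPoly3),
      D ((1 : ℂ), (0 : TruncPoly3)) = 0 ∧ D ((0 : ℂ), (1 : TruncPoly3)) = 0) ∧
    (∀ D₁ D₂ : Derivation ℂ (ℂ × TruncPoly3) (ℂ × TruncPoly3),
      D₁ ((0 : ℂ), truncX3) = D₂ ((0 : ℂ), truncX3) → D₁ = D₂) ∧
    Set.range (fun D : Derivation ℂ (ℂ × TruncPoly3) (ℂ × TruncPoly3) =>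
        D ((0 : ℂ), truncX3)) =
      ((Ideal.span {(((0 : ℂ), truncX3) : ℂ × TruncPoly3)} : Ideal (ℂ × TruncPoly3)) :
        Set (ℂ × TruncPoly3)) := by
  refine ⟨?_, fun D => ⟨deriv_idem D he1, deriv_idem D he2⟩, deriv_unique, range_eq⟩
  let Φ : Derivation ℂ A4 A4 →ₗ[ℂ] A4 :=
    { toFun := fun D => D tA
      map_add' := fun D₁ D₂ => by simp
      map_smul' := fun c D => by simp }
  have hinj : Function.Injective Φ := fun D₁ D₂ h => deriv_unique D₁ D₂ h
  rw [(LinearEquiv.ofInjective Φ hinj).finrank_eq]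
  have hrangeset : Set.range ![tA, tA * tA] = ({tA, tA * tA} : Set A4) := by
    ext x
    simp [Matrix.range_cons, Matrix.range_empty, or_comm]
  have hrange : LinearMap.range Φ = Submodule.span ℂ (Set.range ![tA, tA * tA]) := by
    apply SetLike.coe_injective
    rw [LinearMap.coe_range]
    calc (Set.range ⇑Φ : Set A4) = Set.range (fun D : Derivation ℂ A4 A4 => D tA) := rfl
      _ = ((Ideal.span {tA} : Ideal A4) : Set A4) := range_eq
      _ = (((Ideal.span {tA} : Ideal A4).restrictScalars ℂ : Submodule ℂ A4) : Set A4) := rfl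
      _ = ((Submodule.span ℂ ({tA, tA * tA} : Set A4) : Submodule ℂ A4) : Set A4) := by
          rw [ideal_restrict]
      _ = _ := by rw [hrangeset]
  rw [hrange, finrank_span_eq_card li_pair, Fintype.card_fin]
end

section
/- Let L be a module over DualNumber ℂ (so that in particular L is a ℂ-vector space and ε acts ℂ-linearly with square zero), regarded as an abelian complex Lie algebra, and let ρ : L → Derivations(DualNumber ℂ) be a ℂ-linear map such that for all x, y ∈ L and all a ∈ DualNumber ℂ one has (ρ x a) • y = 0 (the Lie–Rinehart compatibility condition for an abelian bracket). Then either ε • y = 0 for every y ∈ L (the action is trivial), or ρ = 0 (the anchor is null). -/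
set_option synthInstance.maxHeartbeats 400000
set_option maxHeartbeats 1000000

/-- Let `L` be a module over the dual numbers `ℂ[ε]` (in particular a ℂ-vector space),
regarded as an abelian complex Lie algebra, and let `ρ` be a ℂ-linear map from `L` to
the ℂ-derivations of `ℂ[ε]` satisfying the Lie–Rinehart compatibility condition for the
abelian bracket, `(ρ x a) • y = 0`.  Then either `ε` acts by zero on `L` (the action is
trivial) or `ρ = 0` (the anchor is null). -/
theorem stmt_12 (L : Type*) [AddCommGroup L] [Module ℂ L]
    [Module (DualNumber ℂ) L] [IsScalarTower ℂ (DualNumber ℂ) L]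
    (ρ : L →ₗ[ℂ] Derivation ℂ (DualNumber ℂ) (DualNumber ℂ))
    (hcomp : ∀ (x y : L) (a : DualNumber ℂ), (ρ x a) • y = 0) :
    (∀ y : L, (DualNumber.eps : DualNumber ℂ) • y = 0) ∨ ρ = 0 := by
  by_cases htriv : ∀ y : L, (DualNumber.eps : DualNumber ℂ) • y = 0
  · exact Or.inl htriv
  · right
    push_neg at htriv
    obtain ⟨y, hy⟩ := htriv
    -- For every x, the derivation ρ x sends ε to a multiple of ε
    have hDeps : ∀ x : L, ∃ d : ℂ, (ρ x) DualNumber.eps = d • DualNumber.eps := by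
      intro x
      have h2 : (ρ x) (DualNumber.eps * DualNumber.eps) = 0 := by
        rw [DualNumber.eps_mul_eps, map_zero]
      rw [Derivation.leibniz] at h2
      -- h2 : ε • D ε + D ε • ε = 0, i.e. 2 * (fst of D ε) * ε = 0
      set D := (ρ x) DualNumber.eps with hD
      have hfst : (D : DualNumber ℂ).fst = 0 := by
        have := congrArg TrivSqZeroExt.snd h2
        simp only [TrivSqZeroExt.snd_add, smul_eq_mul, TrivSqZeroExt.snd_mul,
          TrivSqZeroExt.snd_zero, DualNumber.fst_eps, DualNumber.snd_eps,
          TrivSqZeroExt.snd_smul] at this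
        -- this should give: fst D * 1 + ... = 0 roughly
        simpa using this
      refine ⟨D.snd, ?_⟩
      rw [← DualNumber.inr_eq_smul_eps]
      ext
      · simpa using hfst
      · simp
    -- Show ρ x ε = 0 using compatibility with y
    have heps0 : ∀ x : L, (ρ x) DualNumber.eps = 0 := by
      intro x
      obtain ⟨d, hd⟩ := hDeps x
      have := hcomp x y DualNumber.eps
      rw [hd, smul_assoc] at this
      rcases smul_eq_zero.mp this with h | h
      · rw [hd, h, zero_smul]
      · exact absurd h hy
    -- A derivation vanishing on ε is zero
    apply LinearMap.ext; intro x
    apply Derivation.ext; intro a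
    have ha : a = TrivSqZeroExt.inl a.fst + a.snd • DualNumber.eps := by
      rw [← DualNumber.inr_eq_smul_eps]
      exact (TrivSqZeroExt.inl_fst_add_inr_snd_eq a).symm
    rw [ha, map_add, Derivation.map_smul, heps0, smul_zero, add_zero]
    have h1 : (TrivSqZeroExt.inl a.fst : DualNumber ℂ) = algebraMap ℂ (DualNumber ℂ) a.fst := rfl
    rw [h1, Derivation.map_algebraMap]
    simp
end

section
/- Let L be a module over DualNumber ℂ which is also a complex Lie algebra with elements f₁, f₂ that are linearly independent, span L, and satisfy ⁅f₁, f₂⁆ = f₂. Let ρ : L → Derivations(DualNumber ℂ) be a ℂ-linear Lie algebra homomorphism (for the commutator bracket on derivations) satisfying the compatibility condition ⁅x, a • y⁆ = (ρ x a) • y + a • ⁅x, y⁆ for all a ∈ DualNumber ℂ and x, y ∈ L. Then ρ f₂ = 0, ε • f₂ = 0, and there exist β, c ∈ ℂ such that ε • f₁ = β • f₂, (ρ f₁)(ε) = c • ε, and β·(1 − c) = 0 (so if the action of ε is nontrivial then (ρ f₁)(ε) = ε). -/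
set_option synthInstance.maxHeartbeats 400000
set_option maxHeartbeats 1000000

open DualNumber TrivSqZeroExt

/-- Any ℂ-derivation of the dual numbers sends `ε` into `ℂ • ε`. -/
lemma der_eps (D : Derivation ℂ (DualNumber ℂ) (DualNumber ℂ)) :
    ∃ c : ℂ, D ε = c • ε := by
  refine ⟨(D ε).snd, ?_⟩
  have h : (0 : DualNumber ℂ) = ε * D ε + ε * D ε := by
    have := D.leibniz ε ε
    rw [eps_mul_eps, map_zero] at this
    exact this
  have hfst : (D ε).fst = 0 := by
    have h2 := congrArg TrivSqZeroExt.snd h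
    simp only [TrivSqZeroExt.snd_mul, TrivSqZeroExt.snd_zero, DualNumber.fst_eps,
      DualNumber.snd_eps, zero_mul, zero_add, one_mul] at h2
    have : (D ε).fst + (D ε).fst = 0 := by
      have h3 := congrArg TrivSqZeroExt.snd h
      simpa [TrivSqZeroExt.snd_mul] using h3.symm
    linear_combination this / 2
  rw [← inr_eq_smul_eps]
  ext
  · simpa using hfst
  · simp

/-- A derivation of the dual numbers vanishing on `ε` is zero. -/
lemma der_ext (D : Derivation ℂ (DualNumber ℂ) (DualNumber ℂ)) (h : D ε = 0) : D = 0 := by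
  have key : ∀ a : DualNumber ℂ, D a = 0 := by
    intro a
    have ha : a = algebraMap ℂ (DualNumber ℂ) a.fst + a.snd • ε := by
      ext <;> simp [TrivSqZeroExt.algebraMap_eq_inl']
    rw [ha, map_add, Derivation.map_algebraMap, Derivation.map_smul, h, smul_zero, add_zero]
  exact Derivation.ext fun a => (key a).trans rfl

/-- Let `L` be a module over the dual numbers `ℂ[ε]` which is also the two-dimensional
non-abelian complex Lie algebra (basis `f₁, f₂` with `⁅f₁, f₂⁆ = f₂`), and let
`ρ : L → Der(ℂ[ε])` be a ℂ-linear Lie algebra homomorphism satisfying the Lie–Rinehart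
compatibility condition.  Then `ρ f₂ = 0`, `ε • f₂ = 0`, and there are `β, c ∈ ℂ` with
`ε • f₁ = β • f₂`, `(ρ f₁)(ε) = c • ε` and `β (1 - c) = 0`. -/
theorem stmt_13 (L : Type*) [LieRing L] [LieAlgebra ℂ L]
    [Module (DualNumber ℂ) L] [IsScalarTower ℂ (DualNumber ℂ) L]
    (f₁ f₂ : L) (hli : LinearIndependent ℂ ![f₁, f₂])
    (hspan : Submodule.span ℂ {f₁, f₂} = ⊤)
    (hbr : ⁅f₁, f₂⁆ = f₂)
    (ρ : L →ₗ[ℂ] Derivation ℂ (DualNumber ℂ) (DualNumber ℂ))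
    (hρ : ∀ x y : L, ρ ⁅x, y⁆ = ⁅ρ x, ρ y⁆)
    (hcomp : ∀ (a : DualNumber ℂ) (x y : L), ⁅x, a • y⁆ = (ρ x) a • y + a • ⁅x, y⁆) :
    ρ f₂ = 0 ∧ (DualNumber.eps : DualNumber ℂ) • f₂ = 0 ∧
    ∃ β c : ℂ, (DualNumber.eps : DualNumber ℂ) • f₁ = β • f₂ ∧
      (ρ f₁) (DualNumber.eps : DualNumber ℂ) = c • (DualNumber.eps : DualNumber ℂ) ∧
      β * (1 - c) = 0 := by
  have hpair := LinearIndependent.pair_iff.mp hli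
  obtain ⟨c, hρf₁ε⟩ := der_eps (ρ f₁)
  obtain ⟨c₂, hρf₂ε⟩ := der_eps (ρ f₂)
  -- ρ f₂ = 0
  have hρf₂ : ρ f₂ = 0 := by
    have h := hρ f₁ f₂
    rw [hbr] at h
    rw [h]
    apply der_ext
    simp only [Derivation.commutator_apply, hρf₁ε, hρf₂ε, Derivation.map_smul, smul_smul]
    rw [mul_comm c₂ c, sub_self]
  -- key identity for f₂
  have hf₂ : ∀ (a : DualNumber ℂ) (y : L), ⁅f₂, a • y⁆ = a • ⁅f₂, y⁆ := by
    intro a y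
    rw [hcomp a f₂ y, hρf₂]; simp
  -- decompositions
  obtain ⟨α, β, hαβ⟩ := Submodule.mem_span_pair.mp
    (hspan ▸ Submodule.mem_top : (ε : DualNumber ℂ) • f₂ ∈ Submodule.span ℂ {f₁, f₂})
  obtain ⟨γ, δ, hγδ⟩ := Submodule.mem_span_pair.mp
    (hspan ▸ Submodule.mem_top : (ε : DualNumber ℂ) • f₁ ∈ Submodule.span ℂ {f₁, f₂})
  have hf₂f₁ : ⁅f₂, f₁⁆ = -f₂ := by rw [← lie_skew, hbr]
  have hsmul : ∀ (r : ℂ) (y : L), (r • (ε : DualNumber ℂ)) • y = r • ((ε:DualNumber ℂ) • y) :=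
    fun r y => smul_assoc r ε y
  -- equation from ⁅f₂, ε • f₁⁆ :  α f₁ + β f₂ = γ f₂
  have e1 : α • f₁ + β • f₂ = γ • f₂ := by
    have h := hf₂ ε f₁
    rw [← hγδ, hf₂f₁, smul_neg, ← hαβ] at h
    have h' : ⁅f₂, γ • f₁ + δ • f₂⁆ = -(γ • f₂) := by simp [hf₂f₁]
    rw [h'] at h
    exact neg_inj.mp h.symm
  have hα : α = 0 ∧ β - γ = 0 := by
    apply hpair
    rw [sub_smul, ← e1]; abel
  obtain ⟨hα0, hβγ⟩ := hα
  have hβγ' : γ = β := by linear_combination -hβγ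
  -- equation from ⁅f₁, ε • f₂⁆ :  β f₂ = c(α f₁ + β f₂) + (α f₁ + β f₂)
  have e2 : β • f₂ = c • (α • f₁ + β • f₂) + (α • f₁ + β • f₂) := by
    have h := hcomp ε f₁ f₂
    rw [hbr, hρf₁ε, hsmul, ← hαβ] at h
    have hl : ⁅f₁, α • f₁ + β • f₂⁆ = β • f₂ := by simp [hbr]
    rwa [hl] at h
  -- equation from ⁅f₁, ε • f₁⁆ :  δ f₂ = c(γ f₁ + δ f₂)
  have e3 : δ • f₂ = c • (γ • f₁ + δ • f₂) := by
    have h := hcomp ε f₁ f₁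
    rw [hρf₁ε, hsmul, ← hγδ, lie_self, smul_zero, add_zero] at h
    have hl : ⁅f₁, γ • f₁ + δ • f₂⁆ = δ • f₂ := by simp [hbr]
    rwa [hl] at h
  -- ε • f₂ = β • f₂
  have hεf₂ : (ε : DualNumber ℂ) • f₂ = β • f₂ := by
    rw [← hαβ, hα0, zero_smul, zero_add]
  -- commuting the two scalar actions
  have hsmulC : ∀ (r : ℂ) (y : L), (ε : DualNumber ℂ) • (r • y) = r • ((ε:DualNumber ℂ) • y) := by
    intro r y
    rw [← algebraMap_smul (DualNumber ℂ) r y, ← mul_smul, mul_comm, mul_smul,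
      algebraMap_smul]
  -- β = 0 from ε² = 0
  have hβ0 : β = 0 := by
    have h : (β * β) • f₂ = 0 := by
      rw [mul_smul, ← hεf₂, ← hsmulC, ← hεf₂, smul_smul, eps_mul_eps, zero_smul]
    have h2 := (hpair 0 (β * β) (by rw [zero_smul, zero_add]; exact h)).2
    exact mul_self_eq_zero.mp h2
  have hεf₂0 : (ε : DualNumber ℂ) • f₂ = 0 := by rw [hεf₂, hβ0, zero_smul]
  refine ⟨hρf₂, hεf₂0, δ, c, ?_, hρf₁ε, ?_⟩
  · rw [← hγδ, hβγ', hβ0, zero_smul, zero_add]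
  · have h4 : (0 : ℂ) • f₁ + (δ - c * δ) • f₂ = 0 := by
      have : δ • f₂ = (c * δ) • f₂ := by
        rw [e3, hβγ', hβ0, zero_smul, zero_add, smul_smul]
      rw [zero_smul, zero_add, sub_smul, this, sub_self]
    have h5 := (hpair 0 (δ - c * δ) h4).2
    linear_combination h5
end
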